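/- Let F ⊣ U : A → X and L ⊣ R : C → X be adjunctions with U and R fully faithful, and suppose F ν : F → F R L is invertible, where ν is the unit of L ⊣ R. Then the functor H = F R : C → A is left adjoint to K = L U : A → C, and the counit of H ⊣ K is invertible (so K is fully faithful). -/

import Mathlib

open CategoryTheory

private lemma sq_inv {D : Type*} [Category D] {w x y z : D}
    (u : w ⟶ x) (b : x ⟶ z) (a : w ⟶ y) (u' : y ⟶ z) [IsIso u] [IsIso u']
    (h : a ≫ u' = u ≫ b) : b ≫ inv u' = inv u ≫ a := by
  rw [IsIso.comp_inv_eq, Category.assoc, h, IsIso.inv_hom_id_assoc]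

theorem stmt1 {X A C : Type*} [Category X] [Category A] [Category C]
    (F : X ⥤ A) (U : A ⥤ X) (adjFU : F ⊣ U) [U.Full] [U.Faithful]
    (L : X ⥤ C) (R : C ⥤ X) (adjLR : L ⊣ R) [R.Full] [R.Faithful]
    (h : IsIso (Functor.whiskerRight adjLR.unit F)) :
    ∃ adj : (R ⋙ F) ⊣ (U ⋙ L), IsIso adj.counit := by
  -- component isomorphisms
  have hFν : ∀ x : X, IsIso (F.map (adjLR.unit.app x)) := fun x => by
    have : IsIso ((Functor.whiskerRight adjLR.unit F).app x) := inferInstance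
    simpa using this
  have hδ : ∀ c : C, IsIso (adjLR.counit.app c) := fun c => inferInstance
  have hε : ∀ a : A, IsIso (adjFU.counit.app a) := fun a => inferInstance
  -- naturality of the candidate unit
  have unit_nat : ∀ {c c' : C} (f : c ⟶ c'),
      (𝟭 C).map f ≫ (inv (adjLR.counit.app c') ≫ L.map (adjFU.unit.app (R.obj c'))) =
      (inv (adjLR.counit.app c) ≫ L.map (adjFU.unit.app (R.obj c))) ≫
        ((R ⋙ F) ⋙ U ⋙ L).map f := by
    intro c c' f
    have := hδ c; have := hδ c'
    have hsq : f ≫ inv (adjLR.counit.app c') =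
        inv (adjLR.counit.app c) ≫ L.map (R.map f) :=
      sq_inv _ _ _ _ (adjLR.counit.naturality f)
    have hη : L.map (R.map f) ≫ L.map (adjFU.unit.app (R.obj c')) =
        L.map (adjFU.unit.app (R.obj c)) ≫ L.map (U.map (F.map (R.map f))) := by
      rw [← L.map_comp, ← L.map_comp]; exact congrArg L.map (adjFU.unit.naturality (R.map f))
    simp only [Functor.id_map, Functor.comp_map, ← Category.assoc, hsq]
    simp only [Category.assoc, hη]
  -- naturality of the candidate counit
  have counit_nat : ∀ {a a' : A} (f : a ⟶ a'),
      ((U ⋙ L) ⋙ R ⋙ F).map f ≫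
        (inv (F.map (adjLR.unit.app (U.obj a'))) ≫ adjFU.counit.app a') =
      (inv (F.map (adjLR.unit.app (U.obj a))) ≫ adjFU.counit.app a) ≫ (𝟭 A).map f := by
    intro a a' f
    have := hFν (U.obj a); have := hFν (U.obj a')
    have hsq : F.map (R.map (L.map (U.map f))) ≫
        inv (F.map (adjLR.unit.app (U.obj a'))) =
        inv (F.map (adjLR.unit.app (U.obj a))) ≫ F.map (U.map f) := by
      refine sq_inv _ _ _ _ ?_
      rw [← F.map_comp, ← F.map_comp]; exact congrArg F.map (adjLR.unit.naturality (U.map f))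
    simp only [Functor.comp_map, Functor.id_map, ← Category.assoc, hsq]
    simp only [Category.assoc, adjFU.counit_naturality f]
  let core : Adjunction.CoreUnitCounit (R ⋙ F) (U ⋙ L) :=
    { unit := { app := fun c => inv (adjLR.counit.app c) ≫ L.map (adjFU.unit.app (R.obj c)),
                naturality := fun _ _ f => unit_nat f }
      counit := { app := fun a =>
                    inv (F.map (adjLR.unit.app (U.obj a))) ≫ adjFU.counit.app a,
                  naturality := fun _ _ f => counit_nat f }
      left_triangle := by
        ext c
        have := hFν (U.obj ((R ⋙ F).obj c)); have := hδ c; have := hFν (R.obj c)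
        simp only [Functor.comp_obj, Functor.id_obj, NatTrans.comp_app, Functor.whiskerRight_app,
          Functor.associator_hom_app, Functor.whiskerLeft_app, NatTrans.id_app, Category.id_comp,
          Functor.comp_map, Functor.map_comp]
        have step : F.map (R.map (L.map (adjFU.unit.app (R.obj c)))) ≫
            inv (F.map (adjLR.unit.app (U.obj (F.obj (R.obj c))))) =
            inv (F.map (adjLR.unit.app (R.obj c))) ≫ F.map (adjFU.unit.app (R.obj c)) := by
          refine sq_inv _ _ _ _ ?_
          rw [← F.map_comp, ← F.map_comp]; exact congrArg F.map (adjLR.unit.naturality _)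
        have tri : F.map (adjFU.unit.app (R.obj c)) ≫
            adjFU.counit.app (F.obj (R.obj c)) = 𝟙 _ := adjFU.left_triangle_components _
        have key : inv (F.map (adjLR.unit.app (R.obj c))) =
            F.map (R.map (adjLR.counit.app c)) := by
          refine IsIso.inv_eq_of_hom_inv_id ?_
          rw [← F.map_comp, adjLR.right_triangle_components]; simp
        have hid : (NatTrans.id (𝟭 C ⋙ R ⋙ F)).app c = 𝟙 (F.obj (R.obj c)) := rfl
        rw [hid, Category.assoc, ← Category.assoc
          (F.map (R.map (L.map (adjFU.unit.app (R.obj c))))), step]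
        simp only [Category.assoc]
        rw [tri, Category.comp_id, key, ← F.map_comp, ← R.map_comp, IsIso.inv_hom_id]
        simp
      right_triangle := by
        ext a
        have := hFν (U.obj a); have := hδ ((U ⋙ L).obj a); have := hε a
        simp only [Functor.comp_obj, Functor.id_obj, NatTrans.comp_app, Functor.whiskerLeft_app,
          Functor.associator_inv_app, Functor.whiskerRight_app, NatTrans.id_app, Category.id_comp,
          Functor.comp_map, Functor.map_comp]
        simp only [NatTrans.id_app, Category.assoc]
        have hLν : L.map (adjLR.unit.app (U.obj a)) ≫
            adjLR.counit.app (L.obj (U.obj a)) = 𝟙 _ :=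
          adjLR.left_triangle_components _
        have hLνeq : L.map (adjLR.unit.app (U.obj a)) =
            inv (adjLR.counit.app (L.obj (U.obj a))) := by
          rw [← Category.id_comp (inv (adjLR.counit.app (L.obj (U.obj a))))]
          exact (IsIso.eq_comp_inv _).mpr hLν
        have hνt : adjLR.unit.app (U.obj a) ≫ adjFU.unit.app (R.obj (L.obj (U.obj a))) ≫
            U.map (inv (F.map (adjLR.unit.app (U.obj a)))) ≫ U.map (adjFU.counit.app a) =
            𝟙 (U.obj a) := by
          have hη := adjFU.unit.naturality (adjLR.unit.app (U.obj a))
          simp only [Functor.id_map, Functor.comp_map, Functor.comp_obj, Functor.id_obj] at hη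
          rw [← Category.assoc, hη, Category.assoc]
          simp only [← U.map_comp]
          rw [IsIso.hom_inv_id_assoc]
          simpa using adjFU.right_triangle_components a
        have hL := congrArg L.map hνt
        simp only [Functor.map_comp] at hL
        rw [hLνeq, IsIso.inv_comp_eq] at hL
        have hid : (NatTrans.id ((U ⋙ L) ⋙ 𝟭 C)).app a = 𝟙 (L.obj (U.obj a)) := rfl
        rw [hid, IsIso.inv_comp_eq, Category.comp_id, hL]; simp
      }
  refine ⟨Adjunction.mkOfUnitCounit core, ?_⟩
  have : ∀ a : A, IsIso ((Adjunction.mkOfUnitCounit core).counit.app a) := by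
    intro a
    show IsIso (inv (F.map (adjLR.unit.app (U.obj a))) ≫ adjFU.counit.app a)
    have := hFν (U.obj a); have := hε a
    infer_instance
  exact NatIso.isIso_of_isIso_app _
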